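/- Let Δ : ℕ^(2) → ℕ be an infinite colouring (i.e., the image of Δ is infinite) and let n ≥ 2 be a natural number. Then there exists an n-tuple (X₁,...,Xₙ) of nonempty subsets of ℕ that is weakly homogeneous with respect to Δ. -/

import Mathlib

/-- The colour of the unordered edge `{x, y}` (only values on distinct pairs matter). -/
def edgeCol (Δ : ℕ → ℕ → ℕ) (x y : ℕ) : ℕ := Δ (min x y) (max x y)

/-- `colourSet Δ X` is the set of colours attained by `Δ` on edges with both endpoints in `X`. -/
def colourSet (Δ : ℕ → ℕ → ℕ) (X : Set ℕ) : Set ℕ :=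
  {c | ∃ x ∈ X, ∃ y ∈ X, x ≠ y ∧ edgeCol Δ x y = c}

/-- `N_Δ(v, X)`: the set of new colours from `v` into `X`, i.e. colours appearing on some
edge from `v` to `X` but on no edge inside `X`. -/
def newCols (Δ : ℕ → ℕ → ℕ) (v : ℕ) (X : Set ℕ) : Set ℕ :=
  {c | (∃ x ∈ X, x ≠ v ∧ edgeCol Δ v x = c) ∧ c ∉ colourSet Δ X}

/-- `X̄ᵢ = X₀ ∪ X₁ ∪ ⋯ ∪ Xᵢ` (0-indexed). -/
def barU (X : ℕ → Set ℕ) (i : ℕ) : Set ℕ := ⋃ j ≤ i, X j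

/-- The tuple `(X 0, …, X (n-1))` is weakly homogeneous with respect to `Δ` (0-indexed):
the sets are nonempty and pairwise disjoint; `X 0` is a singleton (so `Δ(X̄₀^(2)) = ∅`);
the colour sets of the partial unions form a strictly increasing chain; every vertex of
`X (i+1)` sees exactly the colours of `Δ(X̄ᵢ₊₁^(2)) \ Δ(X̄ᵢ^(2))` as new colours into `X̄ᵢ`;
and the full union spans at most `n(n-1)/2` colours. -/
def WeakHomog (Δ : ℕ → ℕ → ℕ) (n : ℕ) (X : ℕ → Set ℕ) : Prop :=
  (∀ i < n, (X i).Nonempty) ∧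
  (∀ i < n, ∀ j < n, i ≠ j → Disjoint (X i) (X j)) ∧
  ((∃ a : ℕ, X 0 = {a}) ∧ colourSet Δ (barU X 0) = ∅) ∧
  (∀ i, i + 1 < n → colourSet Δ (barU X i) ⊂ colourSet Δ (barU X (i + 1))) ∧
  (∀ i, i + 1 < n → ∀ v ∈ X (i + 1),
      newCols Δ v (barU X i) = colourSet Δ (barU X (i + 1)) \ colourSet Δ (barU X i)) ∧
  ((colourSet Δ (barU X (n - 1))).Finite ∧
    (colourSet Δ (barU X (n - 1))).ncard ≤ n * (n - 1) / 2)

section Helpers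

variable {Δ : ℕ → ℕ → ℕ} {S T : Set ℕ}

theorem edgeCol_comm (Δ : ℕ → ℕ → ℕ) (x y : ℕ) : edgeCol Δ x y = edgeCol Δ y x := by
  unfold edgeCol; rw [min_comm, max_comm]

theorem mem_colourSet_of {x y : ℕ} (hx : x ∈ S) (hy : y ∈ S) (hxy : x ≠ y) :
    edgeCol Δ x y ∈ colourSet Δ S := ⟨x, hx, y, hy, hxy, rfl⟩

theorem colourSet_mono (h : S ⊆ T) : colourSet Δ S ⊆ colourSet Δ T := by
  rintro c ⟨x, hx, y, hy, hxy, rfl⟩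
  exact ⟨x, h hx, y, h hy, hxy, rfl⟩

theorem colourSet_singleton (a : ℕ) : colourSet Δ {a} = ∅ := by
  ext c
  simp only [colourSet, Set.mem_setOf_eq, Set.mem_singleton_iff, Set.mem_empty_iff_false,
    iff_false]
  rintro ⟨x, rfl, y, rfl, hxy, -⟩
  exact hxy rfl

theorem colourSet_subset_of_pairs (h : ∀ x ∈ S, ∀ y ∈ S, x ≠ y → edgeCol Δ x y ∈ T) :
    colourSet Δ S ⊆ T := by
  rintro c ⟨x, hx, y, hy, hxy, rfl⟩
  exact h x hx y hy hxy

theorem colourSet_pair {a b : ℕ} (hab : a ≠ b) :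
    colourSet Δ {a, b} = {edgeCol Δ a b} := by
  apply Set.Subset.antisymm
  · apply colourSet_subset_of_pairs
    intro x hx y hy hxy
    simp only [Set.mem_insert_iff, Set.mem_singleton_iff] at hx hy ⊢
    rcases hx with rfl | rfl <;> rcases hy with rfl | rfl
    · exact absurd rfl hxy
    · rfl
    · exact edgeCol_comm Δ x y
    · exact absurd rfl hxy
  · rintro c rfl
    exact mem_colourSet_of (by simp) (by simp) hab

theorem newCols_singleton_step (v : ℕ) (hv : v ∉ S) :
    newCols Δ v S = colourSet Δ (insert v S) \ colourSet Δ S := by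
  ext c
  constructor
  · rintro ⟨⟨x, hx, hxv, rfl⟩, hnot⟩
    exact ⟨⟨v, Set.mem_insert _ _, x, Set.mem_insert_of_mem _ hx, fun h => hxv h.symm, rfl⟩, hnot⟩
  · rintro ⟨⟨x, hx, y, hy, hxy, rfl⟩, hnot⟩
    rcases hx with rfl | hx
    · rcases hy with rfl | hy
      · exact absurd rfl hxy
      · exact ⟨⟨y, hy, fun h => hxy h.symm, rfl⟩, hnot⟩
    · rcases hy with rfl | hy
      · exact ⟨⟨x, hx, fun h => hxy h, edgeCol_comm Δ y x⟩, hnot⟩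
      · exact absurd (mem_colourSet_of hx hy hxy) hnot

theorem barU_zero (X : ℕ → Set ℕ) : barU X 0 = X 0 := by
  simp [barU]

theorem barU_succ (X : ℕ → Set ℕ) (i : ℕ) : barU X (i + 1) = barU X i ∪ X (i + 1) := by
  ext z
  simp only [barU, Set.mem_iUnion, Set.mem_union]
  constructor
  · rintro ⟨j, hj, hz⟩
    rcases Nat.lt_or_ge j (i+1) with h | h
    · exact Or.inl ⟨j, Nat.lt_succ_iff.mp h, hz⟩
    · exact Or.inr (by rwa [show j = i + 1 from le_antisymm hj h] at hz)
  · rintro (⟨j, hj, hz⟩ | hz)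
    · exact ⟨j, le_trans hj (Nat.le_succ i), hz⟩
    · exact ⟨i + 1, le_refl _, hz⟩

theorem barU_mono (X : ℕ → Set ℕ) {i j : ℕ} (h : i ≤ j) : barU X i ⊆ barU X j := by
  intro z hz
  simp only [barU, Set.mem_iUnion] at hz ⊢
  obtain ⟨k, hk, hz⟩ := hz
  exact ⟨k, le_trans hk h, hz⟩

theorem barU_singletons (v : ℕ → ℕ) (i : ℕ) :
    barU (fun k => ({v k} : Set ℕ)) i = v '' (Set.Iic i) := by
  ext z
  simp only [barU, Set.mem_iUnion, Set.mem_singleton_iff, Set.mem_image, Set.mem_Iic]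
  constructor
  · rintro ⟨j, hj, rfl⟩; exact ⟨j, hj, rfl⟩
  · rintro ⟨j, hj, rfl⟩; exact ⟨j, hj, rfl⟩

/-- colour set of a finite vertex set: finite with at most `card choose 2` colours. -/
theorem colourSet_finset (S : Finset ℕ) :
    (colourSet Δ ↑S).Finite ∧ (colourSet Δ ↑S).ncard ≤ S.card.choose 2 := by
  classical
  have hsub : colourSet Δ ↑S ⊆
      ↑((S.powersetCard 2).image (fun t : Finset ℕ => Δ (sInf (t : Set ℕ)) (sSup (t : Set ℕ)))) := by
    apply colourSet_subset_of_pairs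
    intro x hx y hy hxy
    have hmem : ({x, y} : Finset ℕ) ∈ S.powersetCard 2 := by
      rw [Finset.mem_powersetCard]
      constructor
      · intro z hz
        rcases Finset.mem_insert.mp hz with rfl | hz
        · exact hx
        · rw [Finset.mem_singleton.mp hz]; exact hy
      · exact Finset.card_pair hxy
    have : Δ (sInf (↑({x, y} : Finset ℕ) : Set ℕ)) (sSup (↑({x, y} : Finset ℕ) : Set ℕ))
        = edgeCol Δ x y := by
      rw [Finset.coe_insert, Finset.coe_singleton, csInf_pair, csSup_pair]
      simp only [edgeCol]
    rw [← this]
    exact Finset.mem_coe.mpr (Finset.mem_image_of_mem _ hmem)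
  have hfin : (colourSet Δ ↑S).Finite := Set.Finite.subset (Finset.finite_toSet _) hsub
  refine ⟨hfin, ?_⟩
  calc (colourSet Δ ↑S).ncard
      ≤ ((S.powersetCard 2).image (fun t : Finset ℕ => Δ (sInf (t : Set ℕ)) (sSup (t : Set ℕ)))).card := by
        rw [← Set.ncard_coe_finset]
        exact Set.ncard_le_ncard hsub (Finset.finite_toSet _)
    _ ≤ (S.powersetCard 2).card := Finset.card_image_le
    _ = S.card.choose 2 := Finset.card_powersetCard 2 S

end Helpers

section ChainLemma

variable {Δ : ℕ → ℕ → ℕ}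

/-- A "chain" of `n` distinct vertices, each bringing a new colour into the set of
previous ones, yields a weakly homogeneous `n`-tuple of singletons. -/
theorem weakHomog_of_chain (n : ℕ) (hn : 2 ≤ n) (v : ℕ → ℕ)
    (hinj : ∀ i < n, ∀ j < n, i ≠ j → v i ≠ v j)
    (hnew : ∀ i, i + 1 < n →
      (newCols Δ (v (i + 1)) (barU (fun k => ({v k} : Set ℕ)) i)).Nonempty) :
    WeakHomog Δ n (fun k => ({v k} : Set ℕ)) := by
  set X : ℕ → Set ℕ := fun k => ({v k} : Set ℕ) with hX
  have hnotmem : ∀ i, i + 1 < n → v (i + 1) ∉ barU X i := by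
    intro i hi hmem
    rw [barU_singletons] at hmem
    obtain ⟨j, hj, hje⟩ := hmem
    rw [Set.mem_Iic] at hj
    exact hinj (i+1) hi j (by omega) (by omega) hje.symm
  have hins : ∀ i, barU X (i + 1) = insert (v (i + 1)) (barU X i) := by
    intro i
    rw [barU_succ]
    ext z; simp only [Set.mem_union, Set.mem_insert_iff, hX, Set.mem_singleton_iff]
    tauto
  have hdiff : ∀ i, i + 1 < n →
      newCols Δ (v (i + 1)) (barU X i)
        = colourSet Δ (barU X (i + 1)) \ colourSet Δ (barU X i) := by
    intro i hi
    rw [hins i]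
    exact newCols_singleton_step _ (hnotmem i hi)
  refine ⟨?_, ?_, ?_, ?_, ?_, ?_⟩
  · intro i _; exact ⟨v i, rfl⟩
  · intro i hi j hj hij
    simp only [hX, Set.disjoint_singleton_left, Set.mem_singleton_iff]
    exact hinj i hi j hj hij
  · exact ⟨⟨v 0, rfl⟩, by rw [barU_zero]; exact colourSet_singleton _⟩
  · intro i hi
    constructor
    · exact colourSet_mono (barU_mono X (Nat.le_succ i))
    · intro hcontra
      obtain ⟨c, hc⟩ := hnew i hi
      rw [hdiff i hi] at hc
      exact hc.2 (hcontra hc.1)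
  · intro i hi w hw
    rw [Set.mem_singleton_iff.mp hw]
    exact hdiff i hi
  · have hbar : barU X (n - 1) = ↑((Finset.range n).image v) := by
      rw [barU_singletons]
      ext z
      simp only [Set.mem_image, Set.mem_Iic, Finset.coe_image, Finset.coe_range,
        Set.mem_image, Set.mem_Iio]
      constructor
      · rintro ⟨j, hj, rfl⟩; exact ⟨j, by omega, rfl⟩
      · rintro ⟨j, hj, rfl⟩; exact ⟨j, by omega, rfl⟩
    rw [hbar]
    obtain ⟨hfin, hcard⟩ := colourSet_finset (Δ := Δ) ((Finset.range n).image v)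
    refine ⟨hfin, le_trans hcard ?_⟩
    rw [← Nat.choose_two_right]
    exact Nat.choose_le_choose 2 (le_trans Finset.card_image_le (by simp))

end ChainLemma

section FreshEdge

variable {Δ : ℕ → ℕ → ℕ}

theorem fresh_edge (hΔ : (colourSet Δ Set.univ).Infinite) {F : Set ℕ} (hF : F.Finite) :
    ∃ x y : ℕ, x ≠ y ∧ edgeCol Δ x y ∉ F := by
  obtain ⟨c, hc, hcF⟩ := (hΔ.diff hF).nonempty
  obtain ⟨x, -, y, -, hxy, rfl⟩ := hc
  exact ⟨x, y, hxy, hcF⟩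

/-- the palette of a vertex -/
def pal (Δ : ℕ → ℕ → ℕ) (v : ℕ) : Set ℕ := {c | ∃ u, u ≠ v ∧ edgeCol Δ v u = c}

theorem mem_pal {v u : ℕ} (h : u ≠ v) : edgeCol Δ v u ∈ pal Δ v := ⟨u, h, rfl⟩

end FreshEdge

section CaseA

variable {Δ : ℕ → ℕ → ℕ}

/-- If some vertex has an infinite palette, there are arbitrarily long chains. -/
theorem caseA (hΔ : (colourSet Δ Set.univ).Infinite) {v₀ : ℕ} (hv : (pal Δ v₀).Infinite)
    (n : ℕ) (hn : 2 ≤ n) : ∃ X : ℕ → Set ℕ, WeakHomog Δ n X := by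
  -- build chain by finite induction
  suffices h : ∀ m : ℕ, ∃ f : ℕ → ℕ, f 0 = v₀ ∧
      (∀ i < m, ∀ j < m, i ≠ j → f i ≠ f j) ∧
      (∀ i, i + 1 < m →
        (newCols Δ (f (i + 1)) (barU (fun k => ({f k} : Set ℕ)) i)).Nonempty) by
    obtain ⟨f, -, hinj, hnew⟩ := h n
    exact ⟨_, weakHomog_of_chain n hn f hinj hnew⟩
  intro m
  induction m with
  | zero => exact ⟨fun _ => v₀, rfl, by omega, by omega⟩
  | succ m ih =>
    obtain ⟨f, hf0, hinj, hnew⟩ := ih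
    rcases Nat.eq_zero_or_pos m with rfl | hm
    · exact ⟨fun _ => v₀, rfl, by intro i hi j hj hij; omega, by omega⟩
    -- choose a new vertex u with edgeCol v₀ u fresh
    set V : Finset ℕ := (Finset.range m).image f with hV
    have hfinC : (colourSet Δ ↑V).Finite := (colourSet_finset V).1
    obtain ⟨c, hcp, hcnot⟩ := (hv.diff hfinC).nonempty
    obtain ⟨u, huv, hce⟩ := hcp
    set g : ℕ → ℕ := fun k => if k < m then f k else u with hg
    have hgf : ∀ k < m, g k = f k := by intro k hk; simp [hg, hk]
    have hgm : g m = u := by simp [hg]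
    have hunotin : ∀ j < m, u ≠ f j := by
      intro j hj heq
      apply hcnot
      rw [← hce]
      have hv0 : v₀ ∈ (V : Set ℕ) := by
        simp only [hV, Finset.coe_image, Finset.coe_range, Set.mem_image, Set.mem_Iio]
        exact ⟨0, hm, hf0⟩
      have hu : u ∈ (V : Set ℕ) := by
        simp only [hV, Finset.coe_image, Finset.coe_range, Set.mem_image, Set.mem_Iio]
        exact ⟨j, hj, heq.symm⟩
      exact mem_colourSet_of hv0 hu (fun h => huv h.symm)
    refine ⟨g, by rwa [hgf 0 hm], ?_, ?_⟩
    · intro i hi j hj hij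
      rcases Nat.lt_or_ge i m with h1 | h1 <;> rcases Nat.lt_or_ge j m with h2 | h2
      · rw [hgf i h1, hgf j h2]; exact hinj i h1 j h2 hij
      · have : j = m := by omega
        subst this
        rw [hgf i h1, hgm]; exact fun h => hunotin i h1 h.symm
      · have : i = m := by omega
        subst this
        rw [hgf j h2, hgm]; exact hunotin j h2
      · omega
    · intro i hi
      have hbar : (i + 1 < m ∧ barU (fun k => ({g k} : Set ℕ)) i = barU (fun k => ({f k} : Set ℕ)) i)
          ∨ (i + 1 = m) := by
        rcases Nat.lt_or_ge (i + 1) m with h | h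
        · left
          refine ⟨h, ?_⟩
          unfold barU
          apply Set.iUnion_congr
          intro j
          ext z
          simp only [Set.mem_iUnion]
          constructor
          · rintro ⟨hj, hz⟩; rw [hgf j (by omega)] at hz; exact ⟨hj, hz⟩
          · rintro ⟨hj, hz⟩; rw [hgf j (by omega)]; exact ⟨hj, hz⟩
        · right; omega
      rcases hbar with ⟨hlt, hbar⟩ | hbar
      · rw [hbar, hgf (i+1) hlt]
        exact hnew i hlt
      · -- the new step: i + 1 = m, vertex u, new colour c
        have hieq : i + 1 = m := hbar
        refine ⟨c, ⟨v₀, ?_, ?_, ?_⟩, ?_⟩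
        · rw [barU_singletons]
          exact ⟨0, Set.mem_Iic.mpr (Nat.zero_le i), by rw [hgf 0 hm, hf0]⟩
        · rw [hieq, hgm]; exact fun h => huv h.symm
        · rw [hieq, hgm, edgeCol_comm]; exact hce
        · intro hcmem
          apply hcnot
          have : barU (fun k => ({g k} : Set ℕ)) i ⊆ (V : Set ℕ) := by
            rw [barU_singletons]
            rintro z ⟨j, hj, rfl⟩
            simp only [Set.mem_Iic] at hj
            simp only [hV, Finset.coe_image, Finset.coe_range, Set.mem_image, Set.mem_Iio]
            exact ⟨j, by omega, (hgf j (by omega)).symm⟩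
          exact colourSet_mono this hcmem
end CaseA

section Pigeonhole

theorem infinite_fiber {γ : Type*} {T : Set ℕ} (hT : T.Infinite) (f : ℕ → γ)
    (hfin : (f '' T).Finite) : ∃ c, (T ∩ f ⁻¹' {c}).Infinite := by
  by_contra h
  push_neg at h
  have : T ⊆ ⋃ c ∈ f '' T, (T ∩ f ⁻¹' {c}) := by
    intro x hx
    simp only [Set.mem_iUnion]
    exact ⟨f x, Set.mem_image_of_mem f hx, hx, rfl⟩
  exact hT (Set.Finite.subset (Set.Finite.biUnion hfin (fun c _ => h c)) this)

theorem value_dichotomy {J : Set ℕ} (hJ : J.Infinite) (cval : ℕ → ℕ) :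
    (cval '' J).Infinite ∨ ∃ v, (J ∩ cval ⁻¹' {v}).Infinite := by
  rcases Set.finite_or_infinite (cval '' J) with h | h
  · exact Or.inr (infinite_fiber hJ cval h)
  · left; exact h

end Pigeonhole

section CaseBPairs

variable {Δ : ℕ → ℕ → ℕ}

/-- B1: an infinite sequence of pairs, each with a colour fresh for all earlier palettes. -/
theorem exists_pairs (hΔ : (colourSet Δ Set.univ).Infinite)
    (hpal : ∀ v, (pal Δ v).Finite) :
    ∃ g : ℕ → ℕ × ℕ, (∀ i, (g i).1 ≠ (g i).2) ∧
      ∀ i j, i < j → edgeCol Δ (g j).1 (g j).2 ∉ pal Δ (g i).1 ∪ pal Δ (g i).2 := by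
  obtain ⟨f, hP, hr⟩ := exists_seq_of_forall_finset_exists
    (fun pr : ℕ × ℕ => pr.1 ≠ pr.2)
    (fun pr pr' : ℕ × ℕ => edgeCol Δ pr'.1 pr'.2 ∉ pal Δ pr.1 ∪ pal Δ pr.2)
    (by
      intro s _
      have hF : (⋃ pr ∈ (s : Set (ℕ × ℕ)), (pal Δ pr.1 ∪ pal Δ pr.2)).Finite :=
        Set.Finite.biUnion s.finite_toSet (fun pr _ => (hpal pr.1).union (hpal pr.2))
      obtain ⟨x, y, hxy, hfresh⟩ := fresh_edge hΔ hF
      refine ⟨(x, y), hxy, ?_⟩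
      intro pr hpr hmem
      apply hfresh
      simp only [Set.mem_iUnion]
      exact ⟨pr, hpr, hmem⟩)
  exact ⟨f, hP, fun i j hij => hr i j hij⟩

theorem pal_left {x y : ℕ} (h : x ≠ y) : edgeCol Δ x y ∈ pal Δ x :=
  ⟨y, fun hh => h hh.symm, rfl⟩

theorem pal_right {x y : ℕ} (h : x ≠ y) : edgeCol Δ x y ∈ pal Δ y :=
  ⟨x, h, edgeCol_comm Δ y x⟩

/-- All vertices in the pair sequence are distinct. -/
theorem pairs_distinct {g : ℕ → ℕ × ℕ} (hne : ∀ i, (g i).1 ≠ (g i).2)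
    (hfresh : ∀ i j, i < j → edgeCol Δ (g j).1 (g j).2 ∉ pal Δ (g i).1 ∪ pal Δ (g i).2)
    {i j : ℕ} (hij : i < j) :
    (g j).1 ≠ (g i).1 ∧ (g j).1 ≠ (g i).2 ∧ (g j).2 ≠ (g i).1 ∧ (g j).2 ≠ (g i).2 := by
  refine ⟨?_, ?_, ?_, ?_⟩
  · intro h
    exact hfresh i j hij (Or.inl (h ▸ pal_left (hne j)))
  · intro h
    exact hfresh i j hij (Or.inr (h ▸ pal_left (hne j)))
  · intro h
    exact hfresh i j hij (Or.inl (h ▸ pal_right (hne j)))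
  · intro h
    exact hfresh i j hij (Or.inr (h ▸ pal_right (hne j)))

end CaseBPairs

section Diagonal

variable {Δ : ℕ → ℕ → ℕ}

/-- One refinement step for the diagonal argument. -/
theorem dstep_ex {g : ℕ → ℕ × ℕ} (hne : ∀ i, (g i).1 ≠ (g i).2)
    (hfresh : ∀ i j, i < j → edgeCol Δ (g j).1 (g j).2 ∉ pal Δ (g i).1 ∪ pal Δ (g i).2)
    (hpal : ∀ v, (pal Δ v).Finite) (T : Set ℕ) (hT : T.Infinite) :
    ∃ T' : Set ℕ, T'.Infinite ∧ T' ⊆ T ∩ Set.Ioi (sInf T) ∧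
      ∀ j ∈ T', ∀ k ∈ T',
        edgeCol Δ (g (sInf T)).1 (g j).1 = edgeCol Δ (g (sInf T)).1 (g k).1 ∧
        edgeCol Δ (g (sInf T)).1 (g j).2 = edgeCol Δ (g (sInf T)).1 (g k).2 ∧
        edgeCol Δ (g (sInf T)).2 (g j).1 = edgeCol Δ (g (sInf T)).2 (g k).1 ∧
        edgeCol Δ (g (sInf T)).2 (g j).2 = edgeCol Δ (g (sInf T)).2 (g k).2 := by
  set i := sInf T with hi
  set T₀ := T ∩ Set.Ioi i with hT₀
  have hT₀inf : T₀.Infinite := by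
    have : T ∩ Set.Ioi i = T \ Set.Iic i := by
      ext z; simp only [Set.mem_inter_iff, Set.mem_Ioi, Set.mem_diff, Set.mem_Iic, not_le]
    rw [hT₀, this]
    exact hT.diff (Set.finite_Iic i)
  set f : ℕ → ℕ × ℕ × ℕ × ℕ := fun j =>
    (edgeCol Δ (g i).1 (g j).1, edgeCol Δ (g i).1 (g j).2,
     edgeCol Δ (g i).2 (g j).1, edgeCol Δ (g i).2 (g j).2) with hf
  have himg : (f '' T₀).Finite := by
    apply Set.Finite.subset
      (((hpal (g i).1).prod (((hpal (g i).1).prod (((hpal (g i).2).prod (hpal (g i).2)))))))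
    rintro q ⟨j, hj, rfl⟩
    have hij : i < j := hj.2
    obtain ⟨h1, h2, h3, h4⟩ := pairs_distinct hne hfresh hij
    refine ⟨⟨(g j).1, h1, rfl⟩, ⟨(g j).2, h3, rfl⟩, ⟨(g j).1, h2, rfl⟩, ⟨(g j).2, h4, rfl⟩⟩
  obtain ⟨c, hc⟩ := infinite_fiber hT₀inf f himg
  refine ⟨T₀ ∩ f ⁻¹' {c}, hc, fun z hz => hz.1, ?_⟩
  intro j hj k hk
  have hj' : f j = c := hj.2
  have hk' : f k = c := hk.2
  have : f j = f k := by rw [hj', hk']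
  rw [hf] at this
  simp only [Prod.mk.injEq] at this
  exact ⟨this.1, this.2.1, this.2.2.1, this.2.2.2⟩

/-- The diagonal refinement: a strictly monotone subsequence along which all four
cross-colour functions depend only on the lower index. -/
theorem diagonal {g : ℕ → ℕ × ℕ} (hne : ∀ i, (g i).1 ≠ (g i).2)
    (hfresh : ∀ i j, i < j → edgeCol Δ (g j).1 (g j).2 ∉ pal Δ (g i).1 ∪ pal Δ (g i).2)
    (hpal : ∀ v, (pal Δ v).Finite) :
    ∃ σ : ℕ → ℕ, StrictMono σ ∧
      ∀ k l l', k < l → k < l' →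
        (edgeCol Δ (g (σ k)).1 (g (σ l)).1 = edgeCol Δ (g (σ k)).1 (g (σ l')).1 ∧
         edgeCol Δ (g (σ k)).1 (g (σ l)).2 = edgeCol Δ (g (σ k)).1 (g (σ l')).2 ∧
         edgeCol Δ (g (σ k)).2 (g (σ l)).1 = edgeCol Δ (g (σ k)).2 (g (σ l')).1 ∧
         edgeCol Δ (g (σ k)).2 (g (σ l)).2 = edgeCol Δ (g (σ k)).2 (g (σ l')).2) := by
  classical
  set step : {T : Set ℕ // T.Infinite} → {T : Set ℕ // T.Infinite} := fun D =>
    ⟨Classical.choose (dstep_ex hne hfresh hpal D.1 D.2),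
     (Classical.choose_spec (dstep_ex hne hfresh hpal D.1 D.2)).1⟩ with hstep
  set dst : ℕ → {T : Set ℕ // T.Infinite} := fun k =>
    Nat.rec ⟨Set.univ, Set.infinite_univ⟩ (fun _ p => step p) k with hdst
  have hdstsucc : ∀ k, dst (k + 1) = step (dst k) := fun k => rfl
  set σ : ℕ → ℕ := fun k => sInf (dst k).1 with hσ
  have hmem : ∀ k, σ k ∈ (dst k).1 := fun k => Nat.sInf_mem (dst k).2.nonempty
  have hsub : ∀ k, (dst (k + 1)).1 ⊆ (dst k).1 ∩ Set.Ioi (σ k) := by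
    intro k
    rw [hdstsucc k]
    exact (Classical.choose_spec (dstep_ex hne hfresh hpal (dst k).1 (dst k).2)).2.1
  have hconst : ∀ k, ∀ j ∈ (dst (k+1)).1, ∀ l ∈ (dst (k+1)).1,
      edgeCol Δ (g (σ k)).1 (g j).1 = edgeCol Δ (g (σ k)).1 (g l).1 ∧
      edgeCol Δ (g (σ k)).1 (g j).2 = edgeCol Δ (g (σ k)).1 (g l).2 ∧
      edgeCol Δ (g (σ k)).2 (g j).1 = edgeCol Δ (g (σ k)).2 (g l).1 ∧
      edgeCol Δ (g (σ k)).2 (g j).2 = edgeCol Δ (g (σ k)).2 (g l).2 := by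
    intro k
    rw [hdstsucc k]
    exact (Classical.choose_spec (dstep_ex hne hfresh hpal (dst k).1 (dst k).2)).2.2
  have hchain : ∀ k l, k ≤ l → (dst l).1 ⊆ (dst k).1 := by
    intro k l hkl
    induction l with
    | zero => rw [Nat.le_zero.mp hkl]
    | succ l ih =>
      rcases Nat.lt_or_ge k (l+1) with h | h
      · exact le_trans (le_trans (hsub l) Set.inter_subset_left) (ih (by omega))
      · rw [le_antisymm hkl h]
  have hmemlater : ∀ k l, k < l → σ l ∈ (dst (k+1)).1 := by
    intro k l hkl
    exact hchain (k+1) l hkl (hmem l)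
  refine ⟨σ, ?_, ?_⟩
  · apply strictMono_nat_of_lt_succ
    intro k
    exact ((hsub k) (hmem (k+1))).2
  · intro k l l' hl hl'
    exact hconst k (σ l) (hmemlater k l hl) (σ l') (hmemlater k l' hl')

end Diagonal

section Selection

theorem select_distinct {J : Set ℕ} (c : ℕ → ℕ) (h : (c '' J).Infinite)
    {G : Set ℕ} (hG : G.Finite) :
    ∃ e : ℕ → ℕ, StrictMono e ∧ (∀ k, e k ∈ J) ∧ (∀ k, c (e k) ∉ G) ∧
      ∀ k l, k < l → c (e k) ≠ c (e l) := by
  obtain ⟨f, hP, hr⟩ := exists_seq_of_forall_finset_exists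
    (fun i : ℕ => i ∈ J ∧ c i ∉ G)
    (fun i j : ℕ => i < j ∧ c i ≠ c j)
    (by
      intro s _
      set N := s.sup id with hN
      have hbad : ((c '' ↑s) ∪ G ∪ c '' (J ∩ Set.Iic N)).Finite :=
        ((s.finite_toSet.image c).union hG).union
          ((Set.finite_Iic N).inter_of_right J |>.image c)
      obtain ⟨v, hv, hvbad⟩ := (h.diff hbad).nonempty
      obtain ⟨y, hyJ, rfl⟩ := hv
      have hyN : N < y := by
        by_contra hcon
        push_neg at hcon
        exact hvbad (Or.inr ⟨y, ⟨hyJ, hcon⟩, rfl⟩)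
      refine ⟨y, ⟨hyJ, fun hh => hvbad (Or.inl (Or.inr hh))⟩, ?_⟩
      intro x hx
      have hxN : x ≤ N := Finset.le_sup (f := id) hx
      exact ⟨by omega, fun hh => hvbad (Or.inl (Or.inl ⟨x, hx, hh⟩))⟩)
  refine ⟨f, ?_, fun k => (hP k).1, fun k => (hP k).2, fun k l hkl => (hr k l hkl).2⟩
  intro k l hkl
  exact (hr k l hkl).1

end Selection

section ChainBroadcast

variable {Δ : ℕ → ℕ → ℕ}

/-- Build a weakly homogeneous tuple out of a "broadcast" family with pairwise
distinct broadcast values. -/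
theorem chain_of_broadcast (n : ℕ) (hn : 2 ≤ n) (s t c : ℕ → ℕ) (G : Set ℕ)
    (e : ℕ → ℕ)
    (hst : ∀ k l, k < l → edgeCol Δ (s (e k)) (t (e l)) = c (e k))
    (hss : ∀ k l, k < l → edgeCol Δ (s (e k)) (s (e l)) ∈ insert (c (e k)) G)
    (hcd : ∀ k l, k < l → c (e k) ≠ c (e l))
    (hcG : ∀ k, c (e k) ∉ G)
    (hsd : ∀ k l, k < l → s (e k) ≠ s (e l))
    (htd : ∀ k, k < n - 1 → s (e k) ≠ t (e (n - 1))) :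
    ∃ X : ℕ → Set ℕ, WeakHomog Δ n X := by
  set v : ℕ → ℕ := fun k => if k = 0 then t (e (n - 1)) else s (e (k - 1)) with hv
  have hv0 : v 0 = t (e (n - 1)) := by simp [hv]
  have hvs : ∀ k, v (k + 1) = s (e k) := by intro k; simp [hv]
  refine ⟨_, weakHomog_of_chain n hn v ?_ ?_⟩
  · intro i hi j hj hij
    match i, j with
    | 0, 0 => exact absurd rfl hij
    | 0, (j+1) => rw [hv0, hvs]; exact fun hh => htd j (by omega) hh.symm
    | (i+1), 0 => rw [hv0, hvs]; exact htd i (by omega)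
    | (i+1), (j+1) =>
      rw [hvs, hvs]
      rcases Nat.lt_or_ge i j with h | h
      · exact hsd i j h
      · have : j < i := by omega
        exact fun hh => hsd j i this hh.symm
  · intro i hi
    refine ⟨c (e i), ⟨v 0, ?_, ?_, ?_⟩, ?_⟩
    · rw [barU_singletons]; exact ⟨0, Set.mem_Iic.mpr (Nat.zero_le i), rfl⟩
    · rw [hv0, hvs]; exact fun hh => htd i (by omega) hh.symm
    · rw [hv0, hvs]; exact hst i (n - 1) (by omega)
    · intro hmem
      have hsub : colourSet Δ (barU (fun k => ({v k} : Set ℕ)) i)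
          ⊆ G ∪ (fun k => c (e k)) '' (Set.Iio i) := by
        apply colourSet_subset_of_pairs
        rw [barU_singletons]
        rintro z ⟨j, hj, rfl⟩ z' ⟨j', hj', rfl⟩ hzz
        rw [Set.mem_Iic] at hj hj'
        match j, j' with
        | 0, 0 => exact absurd rfl hzz
        | 0, (j'+1) =>
          have hj2 : j' < n - 1 := by omega
          have hj3 : j' < i := by omega
          rw [hv0, hvs, edgeCol_comm]
          rw [hst j' (n-1) hj2]
          exact Or.inr ⟨j', hj3, rfl⟩
        | (j+1), 0 =>
          have hj2 : j < n - 1 := by omega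
          have hj3 : j < i := by omega
          rw [hv0, hvs]
          rw [hst j (n-1) hj2]
          exact Or.inr ⟨j, hj3, rfl⟩
        | (j+1), (j'+1) =>
          rw [hvs, hvs]
          rcases Nat.lt_or_ge j j' with h | h
          · rcases Set.mem_insert_iff.mp (hss j j' h) with h' | h'
            · rw [h']; exact Or.inr ⟨j, (by omega : j < i), rfl⟩
            · exact Or.inl h'
          · have hlt : j' < j := by
              rcases Nat.lt_or_ge j' j with h2 | h2
              · exact h2
              · exact absurd (by omega : j = j') (fun hh => hzz (by rw [hh]))
            rw [edgeCol_comm]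
            rcases Set.mem_insert_iff.mp (hss j' j hlt) with h' | h'
            · rw [h']; exact Or.inr ⟨j', (by omega : j' < i), rfl⟩
            · exact Or.inl h'
      rcases hsub hmem with h | ⟨k, hk, hck⟩
      · exact hcG i h
      · rw [Set.mem_Iio] at hk
        exact hcd k i hk hck

end ChainBroadcast

section FinalConstruction

variable {Δ : ℕ → ℕ → ℕ}

/-- The main non-singleton construction: from a family of pairs with constant
broadcast colours and fresh private colours, build a weakly homogeneous `n`-tuple. -/
theorem final_construction (n : ℕ) (hn : 3 ≤ n)
    (u w q : ℕ → ℕ) (a a' b b' : ℕ)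
    (hq : ∀ k, edgeCol Δ (u k) (w k) = q k)
    (huu : ∀ k l, k < l → edgeCol Δ (u k) (u l) = a)
    (huw : ∀ k l, k < l → edgeCol Δ (u k) (w l) = a')
    (hwu : ∀ k l, k < l → edgeCol Δ (w k) (u l) = b)
    (hww : ∀ k l, k < l → edgeCol Δ (w k) (w l) = b')
    (hqc : ∀ k, 1 ≤ k → q k ≠ a ∧ q k ≠ a' ∧ q k ≠ b ∧ q k ≠ b')
    (hqd : ∀ k l, k < l → q k ≠ q l)
    (hud : ∀ k l, k ≠ l → u k ≠ u l)
    (hwd : ∀ k l, k ≠ l → w k ≠ w l)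
    (huwd : ∀ k l, u k ≠ w l) :
    ∃ X : ℕ → Set ℕ, WeakHomog Δ n X := by
  classical
  set U : Set ℕ := u '' {k | 1 ≤ k ∧ k ≤ n - 1} with hU
  set W : ℕ → Set ℕ := fun j => w '' {k | 1 ≤ k ∧ k ≤ j} with hW
  set X : ℕ → Set ℕ := fun i =>
    if i = 0 then {u 1} else if i = 1 then {w 1}
    else if i = 2 then u '' {k | 2 ≤ k ∧ k ≤ n - 1}
    else if i < n then {w (i - 1)} else ∅ with hXdef
  have hX0 : X 0 = {u 1} := by simp [hXdef]
  have hX1 : X 1 = {w 1} := by simp [hXdef]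
  have hX2 : X 2 = u '' {k | 2 ≤ k ∧ k ≤ n - 1} := by simp [hXdef]
  have hXi : ∀ i, 3 ≤ i → i < n → X i = {w (i - 1)} := by
    intro i h3 hin
    simp only [hXdef]
    rw [if_neg (by omega), if_neg (by omega), if_neg (by omega), if_pos hin]
  -- edge colour helpers (unordered versions)
  have euu : ∀ k l, k ≠ l → edgeCol Δ (u k) (u l) = a := by
    intro k l hkl
    rcases Nat.lt_or_ge k l with h | h
    · exact huu k l h
    · rw [edgeCol_comm]; exact huu l k (by omega)
  have eww : ∀ k l, k ≠ l → edgeCol Δ (w k) (w l) = b' := by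
    intro k l hkl
    rcases Nat.lt_or_ge k l with h | h
    · exact hww k l h
    · rw [edgeCol_comm]; exact hww l k (by omega)
  have euw : ∀ k l, edgeCol Δ (u k) (w l) =
      if k < l then a' else if l < k then b else q k := by
    intro k l
    rcases Nat.lt_trichotomy k l with h | h | h
    · rw [if_pos h]; exact huw k l h
    · subst h; rw [if_neg (lt_irrefl _), if_neg (lt_irrefl _)]; exact hq k
    · rw [if_neg (by omega), if_pos h, edgeCol_comm]; exact hwu l k h
  -- barU computations
  have bar0 : barU X 0 = {u 1} := by rw [barU_zero, hX0]
  have bar1 : barU X 1 = {u 1, w 1} := by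
    rw [barU_succ, bar0, hX1]
    ext z
    simp only [Set.mem_union, Set.mem_insert_iff, Set.mem_singleton_iff]
  have bar2 : barU X 2 = U ∪ W 1 := by
    rw [barU_succ, bar1, hX2]
    ext z
    simp only [Set.mem_union, Set.mem_insert_iff, Set.mem_singleton_iff, hU, hW,
      Set.mem_image, Set.mem_setOf_eq]
    constructor
    · rintro ((rfl | rfl) | ⟨k, ⟨hk1, hk2⟩, rfl⟩)
      · exact Or.inl ⟨1, ⟨le_refl _, by omega⟩, rfl⟩
      · exact Or.inr ⟨1, ⟨le_refl _, le_refl _⟩, rfl⟩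
      · exact Or.inl ⟨k, ⟨by omega, hk2⟩, rfl⟩
    · rintro (⟨k, ⟨hk1, hk2⟩, rfl⟩ | ⟨k, ⟨hk1, hk2⟩, rfl⟩)
      · rcases Nat.eq_or_lt_of_le hk1 with h | h
        · exact Or.inl (Or.inl (by rw [← h]))
        · exact Or.inr ⟨k, ⟨h, hk2⟩, rfl⟩
      · have : k = 1 := by omega
        subst this
        exact Or.inl (Or.inr rfl)
  have barj : ∀ j, 2 ≤ j → j ≤ n - 1 → barU X j = U ∪ W (j - 1) := by
    intro j
    induction j with
    | zero => omega
    | succ j ih =>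
      intro h2 hj
      rcases Nat.lt_or_ge j 2 with h | h
      · have : j = 1 := by omega
        subst this
        exact bar2
      · rw [barU_succ, ih h (by omega), hXi (j+1) (by omega) (by omega)]
        ext z
        simp only [Set.mem_union, Set.mem_singleton_iff, hW, Set.mem_image, Set.mem_setOf_eq]
        constructor
        · rintro ((hz | ⟨k, ⟨hk1, hk2⟩, rfl⟩) | rfl)
          · exact Or.inl hz
          · exact Or.inr ⟨k, ⟨hk1, by omega⟩, rfl⟩
          · exact Or.inr ⟨j, ⟨by omega, by omega⟩, rfl⟩
        · rintro (hz | ⟨k, ⟨hk1, hk2⟩, rfl⟩)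
          · exact Or.inl (Or.inl hz)
          · rcases Nat.lt_or_ge k j with hkj | hkj
            · exact Or.inl (Or.inr ⟨k, ⟨hk1, by omega⟩, rfl⟩)
            · have : k = j := by omega
              subst this
              exact Or.inr (by simp)
  -- the colour bound for barU j, 2 ≤ j ≤ n - 1
  have colbound : ∀ j, 2 ≤ j → j ≤ n - 1 →
      colourSet Δ (barU X j) ⊆ q '' {k | 1 ≤ k ∧ k ≤ j - 1} ∪ {a, a', b, b'} := by
    intro j h2 hj
    rw [barj j h2 hj]
    apply colourSet_subset_of_pairs
    rintro z (⟨k, ⟨hk1, hk2⟩, rfl⟩ | ⟨k, ⟨hk1, hk2⟩, rfl⟩)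
        z' (⟨l, ⟨hl1, hl2⟩, rfl⟩ | ⟨l, ⟨hl1, hl2⟩, rfl⟩) hzz
    · rw [euu k l (fun h => hzz (by rw [h]))]
      right; simp
    · rw [euw k l]
      rcases Nat.lt_trichotomy k l with h | h | h
      · rw [if_pos h]; right; simp
      · subst h; rw [if_neg (lt_irrefl _), if_neg (lt_irrefl _)]
        left; exact ⟨k, ⟨hk1, hl2⟩, rfl⟩
      · rw [if_neg (by omega), if_pos h]; right; simp
    · rw [edgeCol_comm, euw l k]
      rcases Nat.lt_trichotomy l k with h | h | h
      · rw [if_pos h]; right; simp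
      · subst h; rw [if_neg (lt_irrefl _), if_neg (lt_irrefl _)]
        left; exact ⟨l, ⟨hl1, hk2⟩, rfl⟩
      · rw [if_neg (by omega), if_pos h]; right; simp
    · rw [eww k l (fun h => hzz (by rw [h]))]
      right; simp
  -- exact colour sets for levels 1 and 2
  have col1 : colourSet Δ (barU X 1) = {q 1} := by
    rw [bar1, colourSet_pair (huwd 1 1), hq]
  have hu2U : u 2 ∈ U := ⟨2, ⟨by omega, by omega⟩, rfl⟩
  have hu1U : u 1 ∈ U := ⟨1, ⟨le_refl _, by omega⟩, rfl⟩
  have hw1W : ∀ j, 1 ≤ j → w 1 ∈ W j := fun j hj => ⟨1, ⟨le_refl _, hj⟩, rfl⟩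
  have col2 : colourSet Δ (barU X 2) = {q 1, a, b} := by
    apply Set.Subset.antisymm
    · rw [bar2]
      apply colourSet_subset_of_pairs
      rintro z (⟨k, ⟨hk1, hk2⟩, rfl⟩ | ⟨k, ⟨hk1, hk2⟩, rfl⟩)
          z' (⟨l, ⟨hl1, hl2⟩, rfl⟩ | ⟨l, ⟨hl1, hl2⟩, rfl⟩) hzz
      · rw [euu k l (fun h => hzz (by rw [h]))]; simp
      · have hl : l = 1 := by omega
        subst hl
        rw [euw k 1]
        rcases Nat.lt_trichotomy k 1 with h | h | h
        · omega
        · subst h; simp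
        · rw [if_neg (by omega), if_pos h]; simp
      · have hk : k = 1 := by omega
        subst hk
        rw [edgeCol_comm, euw l 1]
        rcases Nat.lt_trichotomy l 1 with h | h | h
        · omega
        · subst h; simp
        · rw [if_neg (by omega), if_pos h]; simp
      · exact absurd (show w k = w l by
          have h1 : k = 1 := by omega
          have h2 : l = 1 := by omega
          rw [h1, h2]) hzz
    · intro c hc
      rw [bar2]
      simp only [Set.mem_insert_iff, Set.mem_singleton_iff] at hc
      rcases hc with rfl | rfl | rfl
      · rw [← hq 1]
        exact mem_colourSet_of (Set.mem_union_left _ hu1U)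
          (Set.mem_union_right _ (hw1W 1 (le_refl _))) (huwd 1 1)
      · rw [← huu 1 2 (by omega)]
        exact mem_colourSet_of (Set.mem_union_left _ hu1U) (Set.mem_union_left _ hu2U)
          (hud 1 2 (by omega))
      · rw [← hwu 1 2 (by omega)]
        exact mem_colourSet_of (Set.mem_union_right _ (hw1W 1 (le_refl _)))
          (Set.mem_union_left _ hu2U) (huwd 2 1).symm
  have h0 : colourSet Δ (barU X 0) = ∅ := by rw [bar0]; exact colourSet_singleton _
  -- w i is not in barU X i  (for 2 ≤ i ≤ n - 2)
  have hwnot : ∀ i, 2 ≤ i → i ≤ n - 2 → w i ∉ barU X i := by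
    intro i h2 hi hmem
    rw [barj i h2 (by omega)] at hmem
    rcases hmem with ⟨k, ⟨hk1, hk2⟩, hk⟩ | ⟨k, ⟨hk1, hk2⟩, hk⟩
    · exact huwd k i hk
    · exact hwd k i (by omega) hk
  have ins : ∀ i, 2 ≤ i → i + 1 ≤ n - 1 →
      barU X (i + 1) = insert (w i) (barU X i) := by
    intro i h2 hi
    rw [barj (i+1) (by omega) hi, barj i h2 (by omega)]
    ext z
    simp only [Set.mem_union, Set.mem_insert_iff, hW, Set.mem_image, Set.mem_setOf_eq]
    constructor
    · rintro (hz | ⟨k, ⟨hk1, hk2⟩, rfl⟩)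
      · exact Or.inr (Or.inl hz)
      · rcases Nat.lt_or_ge k i with h | h
        · exact Or.inr (Or.inr ⟨k, ⟨hk1, by omega⟩, rfl⟩)
        · have : k = i := by omega
          subst this
          exact Or.inl rfl
    · rintro (rfl | hz | ⟨k, ⟨hk1, hk2⟩, rfl⟩)
      · exact Or.inr ⟨i, ⟨by omega, by omega⟩, rfl⟩
      · exact Or.inl hz
      · exact Or.inr ⟨k, ⟨hk1, by omega⟩, rfl⟩
  have hqfresh : ∀ i, 2 ≤ i → i ≤ n - 2 → q i ∉ colourSet Δ (barU X i) := by
    intro i h2 hi hmem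
    rcases colbound i h2 (by omega) hmem with ⟨k, ⟨hk1, hk2⟩, hk⟩ | hc
    · exact hqd k i (by omega) hk
    · obtain ⟨e1, e2, e3, e4⟩ := hqc i (by omega)
      simp only [Set.mem_insert_iff, Set.mem_singleton_iff] at hc
      tauto
  have hqmem : ∀ i, 2 ≤ i → i + 1 ≤ n - 1 → q i ∈ colourSet Δ (barU X (i + 1)) := by
    intro i h2 hi
    rw [barj (i+1) (by omega) hi, ← hq i]
    exact mem_colourSet_of (Set.mem_union_left _ ⟨i, ⟨by omega, by omega⟩, rfl⟩)
      (Set.mem_union_right _ ⟨i, ⟨by omega, by omega⟩, rfl⟩) (huwd i i)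
  have hq1a : q 1 ≠ a := (hqc 1 le_rfl).1
  have hq1b : q 1 ≠ b := (hqc 1 le_rfl).2.2.1
  refine ⟨X, ?_, ?_, ?_, ?_, ?_, ?_⟩
  · -- nonempty
    intro i hi
    match i with
    | 0 => exact ⟨u 1, by rw [hX0]; rfl⟩
    | 1 => exact ⟨w 1, by rw [hX1]; rfl⟩
    | 2 => exact ⟨u 2, by rw [hX2]; exact ⟨2, ⟨le_rfl, by omega⟩, rfl⟩⟩
    | (i+3) => exact ⟨w (i+2), by rw [hXi (i+3) (by omega) hi]; rfl⟩
  · -- disjoint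
    have key : ∀ i < n, ∀ j < n, i < j → Disjoint (X i) (X j) := by
      intro i hi j hj hij
      rw [Set.disjoint_left]
      intro z hzi hzj
      match i, j with
      | 0, 0 => omega
      | 0, 1 =>
        rw [hX0] at hzi; rw [hX1] at hzj
        exact huwd 1 1 (hzi.symm.trans hzj)
      | 0, 2 =>
        rw [hX0] at hzi; rw [hX2] at hzj
        obtain ⟨k, ⟨hk1, hk2⟩, hk⟩ := hzj
        exact hud k 1 (by omega) (hk.trans hzi)
      | 0, (j+3) =>
        rw [hX0] at hzi; rw [hXi (j+3) (by omega) hj] at hzj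
        exact huwd 1 (j+2) (hzi.symm.trans hzj)
      | 1, 2 =>
        rw [hX1] at hzi; rw [hX2] at hzj
        obtain ⟨k, ⟨hk1, hk2⟩, hk⟩ := hzj
        exact huwd k 1 (hk.trans hzi)
      | 1, (j+3) =>
        rw [hX1] at hzi; rw [hXi (j+3) (by omega) hj] at hzj
        exact hwd 1 (j+2) (by omega) (hzi.symm.trans hzj)
      | 2, (j+3) =>
        rw [hX2] at hzi; rw [hXi (j+3) (by omega) hj] at hzj
        obtain ⟨k, ⟨hk1, hk2⟩, hk⟩ := hzi
        exact huwd k (j+2) (hk.trans hzj)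
      | (i+3), (j+3) =>
        rw [hXi (i+3) (by omega) hi] at hzi; rw [hXi (j+3) (by omega) hj] at hzj
        exact hwd (i+2) (j+2) (by omega) (hzi.symm.trans hzj)
    intro i hi j hj hij
    rcases Nat.lt_or_ge i j with h | h
    · exact key i hi j hj h
    · exact (key j hj i hi (by omega)).symm
  · exact ⟨⟨u 1, hX0⟩, h0⟩
  · -- strict chain
    intro i hi
    refine ⟨colourSet_mono (barU_mono X (Nat.le_succ i)), ?_⟩
    intro hcontra
    match i with
    | 0 =>
      rw [h0, col1] at hcontra
      exact absurd (hcontra rfl) (Set.notMem_empty _)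
    | 1 =>
      rw [col1, col2] at hcontra
      have : a ∈ ({q 1} : Set ℕ) := hcontra (by simp)
      exact hq1a this.symm
    | (i+2) =>
      have h1 : q (i+2) ∈ colourSet Δ (barU X (i+2+1)) := hqmem (i+2) (by omega) (by omega)
      have h2 : q (i+2) ∉ colourSet Δ (barU X (i+2)) := hqfresh (i+2) (by omega) (by omega)
      exact h2 (hcontra h1)
  · -- newCols condition
    intro i hi v hv
    match i with
    | 0 =>
      rw [hX1, Set.mem_singleton_iff] at hv
      subst hv
      have : barU X 1 = insert (w 1) (barU X 0) := by
        rw [bar1, bar0]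
        ext z
        simp only [Set.mem_insert_iff, Set.mem_singleton_iff]
        tauto
      rw [this]
      exact newCols_singleton_step _ (by
        rw [bar0]
        simp only [Set.mem_singleton_iff]
        exact fun h => huwd 1 1 h.symm)
    | 1 =>
      rw [hX2] at hv
      obtain ⟨k, ⟨hk1, hk2⟩, rfl⟩ := hv
      have sub1 : newCols Δ (u k) (barU X 1) ⊆ {a, b} := by
        rintro c ⟨⟨x, hx, hxv, rfl⟩, -⟩
        rw [bar1] at hx
        rcases hx with rfl | rfl
        · rw [euu k 1 (by omega)]; exact Or.inl rfl
        · rw [euw k 1, if_neg (by omega), if_pos (by omega)]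
          exact Or.inr rfl
      have sub2 : ({a, b} : Set ℕ) ⊆ newCols Δ (u k) (barU X 1) := by
        rintro c (rfl | rfl)
        · refine ⟨⟨u 1, by rw [bar1]; exact Or.inl rfl,
            fun h => hud 1 k (by omega) h, euu k 1 (by omega)⟩, ?_⟩
          rw [col1]
          simp only [Set.mem_singleton_iff]
          exact fun h => hq1a h.symm
        · refine ⟨⟨w 1, by rw [bar1]; exact Or.inr rfl, fun h => huwd k 1 h.symm, ?_⟩, ?_⟩
          · rw [euw k 1, if_neg (by omega), if_pos (by omega)]
          · rw [col1]
            simp only [Set.mem_singleton_iff]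
            exact fun h => hq1b h.symm
      have sub3 : colourSet Δ (barU X 2) \ colourSet Δ (barU X 1) = {a, b} := by
        rw [col1, col2]
        ext c
        simp only [Set.mem_diff, Set.mem_insert_iff, Set.mem_singleton_iff]
        constructor
        · rintro ⟨rfl | rfl | rfl, h2⟩
          · exact absurd rfl h2
          · exact Or.inl rfl
          · exact Or.inr rfl
        · rintro (rfl | rfl)
          · exact ⟨Or.inr (Or.inl rfl), fun h => hq1a h.symm⟩
          · exact ⟨Or.inr (Or.inr rfl), fun h => hq1b h.symm⟩
      rw [sub3]
      exact Set.Subset.antisymm sub1 sub2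
    | (i+2) =>
      rw [hXi (i+3) (by omega) hi, Set.mem_singleton_iff] at hv
      subst hv
      rw [ins (i+2) (by omega) (by omega)]
      exact newCols_singleton_step _ (hwnot (i+2) (by omega) (by omega))
  · -- cardinality bound
    rcases Nat.lt_or_ge n 4 with h4 | h4
    · -- n = 3
      have hn3 : n = 3 := by omega
      subst hn3
      have : colourSet Δ (barU X 2) = {q 1, a, b} := col2
      rw [show (3:ℕ) - 1 = 2 from rfl, this]
      refine ⟨(Set.finite_singleton b).insert a |>.insert (q 1), ?_⟩
      calc ({q 1, a, b} : Set ℕ).ncard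
          ≤ ({a, b} : Set ℕ).ncard + 1 :=
            Set.ncard_insert_le _ _
        _ ≤ (({b} : Set ℕ).ncard + 1) + 1 := by
            have := Set.ncard_insert_le a ({b} : Set ℕ)
            omega
        _ ≤ 3 := by rw [Set.ncard_singleton]
        _ ≤ 3 * (3 - 1) / 2 := by norm_num
    · -- n ≥ 4
      have hsub := colbound (n-1) (by omega) (le_refl _)
      have hfin1 : (q '' {k | 1 ≤ k ∧ k ≤ n - 1 - 1}).Finite := by
        apply Set.Finite.image
        have : {k | 1 ≤ k ∧ k ≤ n - 1 - 1} = Set.Icc 1 (n - 1 - 1) := by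
          ext k; simp [Set.mem_Icc]
        rw [this]
        exact Set.finite_Icc _ _
      have hfin2 : ({a, a', b, b'} : Set ℕ).Finite := Set.toFinite _
      have hfin : (q '' {k | 1 ≤ k ∧ k ≤ n - 1 - 1} ∪ {a, a', b, b'}).Finite :=
        hfin1.union hfin2
      refine ⟨Set.Finite.subset hfin hsub, ?_⟩
      have hcard : (q '' {k | 1 ≤ k ∧ k ≤ n - 1 - 1} ∪ ({a, a', b, b'} : Set ℕ)).ncard
          ≤ (n - 2) + 4 := by
        apply le_trans (Set.ncard_union_le _ _)
        have c1 : (q '' {k | 1 ≤ k ∧ k ≤ n - 1 - 1}).ncard ≤ n - 2 := by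
          have hIcc : {k | 1 ≤ k ∧ k ≤ n - 1 - 1} = Set.Icc 1 (n - 2) := by
            ext k; simp only [Set.mem_Icc, Set.mem_setOf_eq]; omega
          rw [hIcc]
          calc (q '' Set.Icc 1 (n-2)).ncard ≤ (Set.Icc 1 (n-2)).ncard :=
                Set.ncard_image_le (Set.finite_Icc _ _)
            _ = (n - 2) := by
                rw [show (Set.Icc 1 (n-2) : Set ℕ) = ↑(Finset.Icc 1 (n-2)) by simp,
                  Set.ncard_coe_finset, Nat.card_Icc]
                omega
          
        have c2 : ({a, a', b, b'} : Set ℕ).ncard ≤ 4 := by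
          calc ({a, a', b, b'} : Set ℕ).ncard
              ≤ ({a', b, b'} : Set ℕ).ncard + 1 := Set.ncard_insert_le _ _
            _ ≤ (({b, b'} : Set ℕ).ncard + 1) + 1 := by
                have := Set.ncard_insert_le a' ({b, b'} : Set ℕ)
                omega
            _ ≤ ((({b'} : Set ℕ).ncard + 1) + 1) + 1 := by
                have := Set.ncard_insert_le b ({b'} : Set ℕ)
                omega
            _ ≤ 4 := by rw [Set.ncard_singleton]
        omega
      have harith : (n - 2) + 4 ≤ n * (n - 1) / 2 := by
        rw [Nat.le_div_iff_mul_le (by norm_num)]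
        have h1 : ((n-2) + 4) * 2 = 2 * n + 4 := by omega
        rw [h1]
        calc 2 * n + 4 ≤ 3 * n := by omega
          _ ≤ (n - 1) * n := Nat.mul_le_mul_right n (by omega)
          _ = n * (n - 1) := Nat.mul_comm _ _
      exact le_trans (le_trans (Set.ncard_le_ncard hsub hfin) hcard) harith

end FinalConstruction

/-- **Theorem 8.** For every infinite colouring `Δ : ℕ^(2) → ℕ` and every `n ≥ 2`,
there exists an `n`-tuple that is weakly homogeneous with respect to `Δ`. -/
theorem exists_weakly_homogeneous (Δ : ℕ → ℕ → ℕ)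
    (hΔ : (colourSet Δ Set.univ).Infinite) (n : ℕ) (hn : 2 ≤ n) :
    ∃ X : ℕ → Set ℕ, WeakHomog Δ n X := by
  classical
  -- n = 2 : trivial
  rcases Nat.lt_or_ge n 3 with hn2 | hn3
  · have hn2' : n = 2 := by omega
    subst hn2'
    refine ⟨_, weakHomog_of_chain 2 le_rfl (fun k => k) (fun i _ j _ hij => hij) ?_⟩
    intro i hi
    have hi0 : i = 0 := by omega
    subst hi0
    refine ⟨edgeCol Δ 1 0, ⟨0, ?_, Nat.zero_ne_one, rfl⟩, ?_⟩
    · rw [barU_singletons]; exact ⟨0, Set.mem_Iic.mpr le_rfl, rfl⟩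
    · rw [barU_singletons]
      have : (fun k => k) '' Set.Iic 0 = {0} := by
        ext z; simp only [Set.mem_image, Set.mem_Iic, Set.mem_singleton_iff]
        constructor
        · rintro ⟨j, hj, rfl⟩; omega
        · rintro rfl; exact ⟨0, le_rfl, rfl⟩
      rw [this, colourSet_singleton]
      exact Set.notMem_empty _
  by_cases hpal : ∀ v, (pal Δ v).Finite
  swap
  · -- Case A
    push_neg at hpal
    obtain ⟨v₀, hv₀⟩ := hpal
    exact caseA hΔ hv₀ n hn
  -- Case B
  obtain ⟨g, hne, hfresh⟩ := exists_pairs hΔ hpal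
  obtain ⟨σ, hσ, hbro⟩ := diagonal hne hfresh hpal
  set Xv : ℕ → ℕ := fun k => (g (σ k)).1 with hXv
  set Yv : ℕ → ℕ := fun k => (g (σ k)).2 with hYv
  have hne' : ∀ i, Xv i ≠ Yv i := fun i => hne (σ i)
  have hdist : ∀ i j, i < j →
      Xv j ≠ Xv i ∧ Xv j ≠ Yv i ∧ Yv j ≠ Xv i ∧ Yv j ≠ Yv i := by
    intro i j hij
    exact pairs_distinct hne hfresh (hσ hij)
  have hfresh' : ∀ i j, i < j →
      edgeCol Δ (Xv j) (Yv j) ∉ pal Δ (Xv i) ∪ pal Δ (Yv i) := by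
    intro i j hij
    exact hfresh (σ i) (σ j) (hσ hij)
  set A : ℕ → ℕ := fun k => edgeCol Δ (Xv k) (Xv (k+1)) with hA
  set A' : ℕ → ℕ := fun k => edgeCol Δ (Xv k) (Yv (k+1)) with hA'
  set B : ℕ → ℕ := fun k => edgeCol Δ (Yv k) (Xv (k+1)) with hB
  set B' : ℕ → ℕ := fun k => edgeCol Δ (Yv k) (Yv (k+1)) with hB'
  have hbroA : ∀ k l, k < l → edgeCol Δ (Xv k) (Xv l) = A k :=
    fun k l hkl => (hbro k l (k+1) hkl (Nat.lt_succ_self k)).1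
  have hbroA' : ∀ k l, k < l → edgeCol Δ (Xv k) (Yv l) = A' k :=
    fun k l hkl => (hbro k l (k+1) hkl (Nat.lt_succ_self k)).2.1
  have hbroB : ∀ k l, k < l → edgeCol Δ (Yv k) (Xv l) = B k :=
    fun k l hkl => (hbro k l (k+1) hkl (Nat.lt_succ_self k)).2.2.1
  have hbroB' : ∀ k l, k < l → edgeCol Δ (Yv k) (Yv l) = B' k :=
    fun k l hkl => (hbro k l (k+1) hkl (Nat.lt_succ_self k)).2.2.2
  -- Stage 1: x-x broadcasts
  rcases value_dichotomy Set.infinite_univ A with hinf | ⟨a, hJ1⟩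
  · obtain ⟨e, he, -, hG, hd⟩ := select_distinct A hinf (Set.finite_empty)
    exact chain_of_broadcast n hn Xv Xv A ∅ e
      (fun k l hkl => hbroA (e k) (e l) (he hkl))
      (fun k l hkl => Set.mem_insert_iff.mpr (Or.inl (hbroA (e k) (e l) (he hkl))))
      hd hG
      (fun k l hkl => fun h => (hdist (e k) (e l) (he hkl)).1 h.symm)
      (fun k hk => fun h => (hdist (e k) (e (n-1)) (he hk)).1 h.symm)
  set J₁ : Set ℕ := Set.univ ∩ A ⁻¹' {a} with hJ₁def
  have hJ1mem : ∀ i ∈ J₁, A i = a := fun i hi => hi.2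
  -- Stage 2: y-y broadcasts
  rcases value_dichotomy hJ1 B' with hinf | ⟨b', hJ2⟩
  · obtain ⟨e, he, -, hG, hd⟩ := select_distinct B' hinf (Set.finite_empty)
    exact chain_of_broadcast n hn Yv Yv B' ∅ e
      (fun k l hkl => hbroB' (e k) (e l) (he hkl))
      (fun k l hkl => Set.mem_insert_iff.mpr (Or.inl (hbroB' (e k) (e l) (he hkl))))
      hd hG
      (fun k l hkl => fun h => (hdist (e k) (e l) (he hkl)).2.2.2 h.symm)
      (fun k hk => fun h => (hdist (e k) (e (n-1)) (he hk)).2.2.2 h.symm)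
  set J₂ : Set ℕ := J₁ ∩ B' ⁻¹' {b'} with hJ₂def
  have hJ2mem : ∀ i ∈ J₂, A i = a ∧ B' i = b' := fun i hi => ⟨hi.1.2, hi.2⟩
  -- Stage 3: x-y broadcasts
  rcases value_dichotomy hJ2 A' with hinf | ⟨a', hJ3⟩
  · obtain ⟨e, he, heJ, hG, hd⟩ := select_distinct A' hinf (Set.finite_singleton a)
    refine chain_of_broadcast n hn Xv Yv A' {a} e
      (fun k l hkl => hbroA' (e k) (e l) (he hkl))
      (fun k l hkl => ?_)
      hd hG
      (fun k l hkl => fun h => (hdist (e k) (e l) (he hkl)).1 h.symm)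
      (fun k hk => ((hdist (e k) (e (n-1)) (he hk)).2.2.1).symm)
    · rw [hbroA (e k) (e l) (he hkl), (hJ2mem (e k) (heJ k)).1]
      exact Set.mem_insert_iff.mpr (Or.inr rfl)
  set J₃ : Set ℕ := J₂ ∩ A' ⁻¹' {a'} with hJ₃def
  have hJ3mem : ∀ i ∈ J₃, A i = a ∧ B' i = b' ∧ A' i = a' :=
    fun i hi => ⟨hi.1.1.2, hi.1.2, hi.2⟩
  -- Stage 4: y-x broadcasts
  rcases value_dichotomy hJ3 B with hinf | ⟨b, hJ4⟩
  · obtain ⟨e, he, heJ, hG, hd⟩ := select_distinct B hinf (Set.finite_singleton b')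
    refine chain_of_broadcast n hn Yv Xv B {b'} e
      (fun k l hkl => hbroB (e k) (e l) (he hkl))
      (fun k l hkl => ?_)
      hd hG
      (fun k l hkl => fun h => (hdist (e k) (e l) (he hkl)).2.2.2 h.symm)
      (fun k hk => ((hdist (e k) (e (n-1)) (he hk)).2.1).symm)
    · rw [hbroB' (e k) (e l) (he hkl), (hJ3mem (e k) (heJ k)).2.1]
      exact Set.mem_insert_iff.mpr (Or.inr rfl)
  set J₄ : Set ℕ := J₃ ∩ B ⁻¹' {b} with hJ₄def
  have hJ4inf : J₄.Infinite := hJ4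
  have hJ4mem : ∀ i ∈ J₄, A i = a ∧ B' i = b' ∧ A' i = a' ∧ B i = b :=
    fun i hi => ⟨hi.1.1.1.2, hi.1.1.2, hi.1.2, hi.2⟩
  -- final: all four broadcasts constant on J₄
  set e : ℕ → ℕ := fun k => Nat.nth (· ∈ J₄) k with he
  have heJ : ∀ k, e k ∈ J₄ := fun k => Nat.nth_mem_of_infinite hJ4inf k
  have hemono : StrictMono e := Nat.nth_strictMono hJ4inf
  set u : ℕ → ℕ := fun k => Xv (e k) with hu
  set w : ℕ → ℕ := fun k => Yv (e k) with hw
  set qq : ℕ → ℕ := fun k => edgeCol Δ (u k) (w k) with hqq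
  have key : ∀ k l, k < l → edgeCol Δ (u k) (u l) = a ∧ edgeCol Δ (u k) (w l) = a'
      ∧ edgeCol Δ (w k) (u l) = b ∧ edgeCol Δ (w k) (w l) = b' := by
    intro k l hkl
    have h1 := hbroA (e k) (e l) (hemono hkl)
    have h2 := hbroA' (e k) (e l) (hemono hkl)
    have h3 := hbroB (e k) (e l) (hemono hkl)
    have h4 := hbroB' (e k) (e l) (hemono hkl)
    obtain ⟨ha, hb', ha', hb⟩ := hJ4mem (e k) (heJ k)
    exact ⟨by rw [hu, h1, ha], by rw [hu, hw, h2, ha'], by rw [hu, hw, h3, hb],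
      by rw [hw, h4, hb']⟩
  have hconsts : a ∈ pal Δ (u 0) ∧ a' ∈ pal Δ (u 0) ∧ b ∈ pal Δ (w 0) ∧ b' ∈ pal Δ (w 0) := by
    obtain ⟨h1, h2, h3, h4⟩ := key 0 1 (by omega)
    refine ⟨⟨u 1, ?_, h1⟩, ⟨w 1, ?_, h2⟩, ⟨u 1, ?_, h3⟩, ⟨w 1, ?_, h4⟩⟩
    · exact fun h => (hdist (e 0) (e 1) (hemono (by omega))).1 h
    · exact fun h => (hdist (e 0) (e 1) (hemono (by omega))).2.2.1 h
    · exact fun h => (hdist (e 0) (e 1) (hemono (by omega))).2.1 h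
    · exact fun h => (hdist (e 0) (e 1) (hemono (by omega))).2.2.2 h
  apply final_construction n hn3 u w qq a a' b b' (fun k => rfl)
    (fun k l hkl => (key k l hkl).1)
    (fun k l hkl => (key k l hkl).2.1)
    (fun k l hkl => (key k l hkl).2.2.1)
    (fun k l hkl => (key k l hkl).2.2.2)
  · -- hqc : private colours avoid the constants
    intro k hk
    have hfr := hfresh' (e 0) (e k) (hemono (by omega))
    rw [Set.mem_union] at hfr
    push_neg at hfr
    refine ⟨fun h => hfr.1 ?_, fun h => hfr.1 ?_, fun h => hfr.2 ?_, fun h => hfr.2 ?_⟩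
    · show qq k ∈ pal Δ (u 0); rw [h]; exact hconsts.1
    · show qq k ∈ pal Δ (u 0); rw [h]; exact hconsts.2.1
    · show qq k ∈ pal Δ (w 0); rw [h]; exact hconsts.2.2.1
    · show qq k ∈ pal Δ (w 0); rw [h]; exact hconsts.2.2.2
  · -- hqd
    intro k l hkl
    intro h
    have hfr := hfresh' (e k) (e l) (hemono hkl)
    have hmem : qq l ∈ pal Δ (Xv (e k)) := by
      rw [← h]
      exact ⟨w k, fun hh => hne' (e k) hh.symm, rfl⟩
    exact hfr (Or.inl hmem)
  · -- hud
    intro k l hkl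
    rcases Nat.lt_or_ge k l with h | h
    · exact fun hh => (hdist (e k) (e l) (hemono h)).1 hh.symm
    · exact fun hh => (hdist (e l) (e k) (hemono (by omega))).1 hh
  · -- hwd
    intro k l hkl
    rcases Nat.lt_or_ge k l with h | h
    · exact fun hh => (hdist (e k) (e l) (hemono h)).2.2.2 hh.symm
    · exact fun hh => (hdist (e l) (e k) (hemono (by omega))).2.2.2 hh
  · -- huwd
    intro k l
    rcases Nat.lt_trichotomy k l with h | h | h
    · exact fun hh => (hdist (e k) (e l) (hemono h)).2.2.1 hh.symm
    · subst h; exact hne' (e k)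
    · exact fun hh => (hdist (e l) (e k) (hemono h)).2.1 hh
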